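/- There exist absolute constants C > 0 and c₀ > 0 such that the following holds. Let n ≥ 1 and 0 < ε ≤ c₀, 0 < δ ≤ c₀ with ε·√(n·ln(1/δ)) ≤ c₀, let μ > 0, and let Y_0, Y_1, …, Y_n be a martingale (with respect to some filtration) with values in [0,∞) such that Y_0 = μ almost surely and e^{−ε}·Y_{i−1} ≤ Y_i ≤ e^{ε}·Y_{i−1} almost surely for every i ∈ [n]. Then, for ε' = C·ε·√(n·ln(1/δ)), E[[Y_n − e^{ε'}·μ]_+ + [μ − e^{ε'}·Y_n]_+] ≤ C·μ·δ. -/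

import Mathlib

open MeasureTheory

noncomputable section

lemma two_cosh_mul_sinh (X Y : ℝ) :
    2 * Real.cosh X * Real.sinh Y = Real.sinh (X + Y) - Real.sinh (X - Y) := by
  rw [Real.sinh_add, Real.sinh_sub]; ring

lemma convexOn_rpow_of_nonpos {s : ℝ} (hs : s ≤ 0) :
    ConvexOn ℝ (Set.Ioi (0:ℝ)) fun x : ℝ => x ^ s := by
  have hint : interior (Set.Ioi (0:ℝ)) = Set.Ioi 0 := interior_Ioi
  refine convexOn_of_hasDerivWithinAt2_nonneg (convex_Ioi 0)
    (f' := fun x => s * x ^ (s-1)) (f'' := fun x => s * ((s-1) * x ^ (s-1-1))) ?_ ?_ ?_ ?_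
  · refine ContinuousOn.rpow_const continuousOn_id fun x hx => Or.inl ?_
    exact ne_of_gt hx
  · intro x hx
    rw [hint] at hx
    exact ((Real.hasDerivAt_rpow_const (Or.inl (ne_of_gt hx))).hasDerivWithinAt)
  · intro x hx
    rw [hint] at hx
    exact (((Real.hasDerivAt_rpow_const (p := s - 1) (Or.inl (ne_of_gt hx))).const_mul s).hasDerivWithinAt)
  · intro x hx
    rw [hint] at hx
    have h1 : (0:ℝ) ≤ s * (s-1) := by nlinarith
    have h2 : (0:ℝ) ≤ x ^ (s-1-1) := Real.rpow_nonneg (le_of_lt hx) _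
    calc (0:ℝ) ≤ s * (s-1) * x ^ (s-1-1) := mul_nonneg h1 h2
    _ = s * ((s-1) * x ^ (s-1-1)) := by ring

lemma convexOn_rpow' {s : ℝ} (hs : 1 ≤ s ∨ s ≤ 0) :
    ConvexOn ℝ (Set.Ioi (0:ℝ)) fun x : ℝ => x ^ s := by
  rcases hs with hs | hs
  · exact (convexOn_rpow hs).subset (fun x hx => Set.mem_Ici.2 (le_of_lt hx)) (convex_Ioi 0)
  · exact convexOn_rpow_of_nonpos hs

lemma rpow_le_secant {ε s : ℝ} (hε : 0 < ε)
    (hconv : ConvexOn ℝ (Set.Ioi (0:ℝ)) fun x : ℝ => x ^ s)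
    {x : ℝ} (h1 : Real.exp (-ε) ≤ x) (h2 : x ≤ Real.exp ε) :
    x ^ s ≤ ((Real.exp ε - x) * Real.exp (-ε) ^ s + (x - Real.exp (-ε)) * Real.exp ε ^ s)
        / (Real.exp ε - Real.exp (-ε)) := by
  set a := Real.exp (-ε) with ha
  set b := Real.exp ε with hb
  have hab : a < b := Real.exp_lt_exp.2 (by linarith)
  have hd : 0 < b - a := by linarith
  have ha0 : (0:ℝ) < a := Real.exp_pos _
  have hx0 : (0:ℝ) < x := lt_of_lt_of_le ha0 h1
  have hsum : (b - x)/(b - a) + (x - a)/(b - a) = 1 := by field_simp; ring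
  have hkey := hconv.2 (Set.mem_Ioi.2 ha0) (Set.mem_Ioi.2 (lt_trans ha0 hab))
    (div_nonneg (by linarith) hd.le) (div_nonneg (by linarith) hd.le) hsum
  simp only [smul_eq_mul] at hkey
  have hcomb : (b - x)/(b - a) * a + (x - a)/(b - a) * b = x := by
    rw [div_mul_eq_mul_div, div_mul_eq_mul_div, ← add_div, div_eq_iff hd.ne']
    ring
  rw [hcomb] at hkey
  calc x ^ s ≤ (b - x)/(b - a) * a ^ s + (x - a)/(b - a) * b ^ s := hkey
  _ = ((b - x) * a ^ s + (x - a) * b ^ s) / (b - a) := by ring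

lemma secant_value_le {ε s m : ℝ} (hε : 0 < ε) (hm : |s - 1/2| ≤ m) :
    ((Real.exp ε - 1) * Real.exp (-ε) ^ s + (1 - Real.exp (-ε)) * Real.exp ε ^ s)
        / (Real.exp ε - Real.exp (-ε)) ≤ Real.cosh (m * ε) := by
  have hab : Real.exp (-ε) < Real.exp ε := Real.exp_lt_exp.2 (by linarith)
  have hd : (0:ℝ) < Real.exp ε - Real.exp (-ε) := by linarith
  rw [div_le_iff₀ hd]
  have hL : (Real.exp ε - 1) * Real.exp (-ε) ^ s + (1 - Real.exp (-ε)) * Real.exp ε ^ s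
      = 2 * (Real.sinh (s*ε) - Real.sinh ((s-1)*ε)) := by
    rw [← Real.exp_mul, ← Real.exp_mul]
    rw [Real.sinh_eq, Real.sinh_eq]
    rw [show (s-1)*ε = s*ε + (-ε) from by ring, show -(s*ε + -ε) = -(s*ε) + ε from by ring]
    rw [Real.exp_add, Real.exp_add, show -ε * s = -(s*ε) from by ring]
    rw [show Real.exp (-(s*ε)) = (Real.exp (s*ε))⁻¹ from Real.exp_neg _,
        show Real.exp (-ε) = (Real.exp ε)⁻¹ from Real.exp_neg _]
    have h1 : Real.exp (s*ε) ≠ 0 := (Real.exp_pos _).ne'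
    have h2 : Real.exp ε ≠ 0 := (Real.exp_pos _).ne'
    field_simp
    ring
  have hR : Real.exp ε - Real.exp (-ε) = 2 * Real.sinh ε := by
    rw [Real.sinh_eq]; ring
  rw [hL, hR]
  -- sinh(sε) - sinh((s-1)ε) = 2 cosh((s-1/2)ε) sinh(ε/2)
  have k1 : Real.sinh (s*ε) - Real.sinh ((s-1)*ε)
      = 2 * Real.cosh ((s - 1/2)*ε) * Real.sinh (ε/2) := by
    rw [two_cosh_mul_sinh]
    rw [show (s - 1/2)*ε + ε/2 = s*ε from by ring, show (s - 1/2)*ε - ε/2 = (s-1)*ε from by ring]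
  have k2 : Real.sinh ε = 2 * Real.sinh (ε/2) * Real.cosh (ε/2) := by
    have := two_cosh_mul_sinh (ε/2) (ε/2)
    simp only [show ε/2 + ε/2 = ε from by ring, sub_self, Real.sinh_zero, sub_zero] at this
    linarith
  rw [k1, k2]
  have hsh : 0 < Real.sinh (ε/2) := Real.sinh_pos_iff.2 (by linarith)
  have hcc : Real.cosh ((s - 1/2)*ε) ≤ Real.cosh (m*ε) := by
    rw [Real.cosh_le_cosh]
    rw [abs_mul, abs_mul, abs_of_pos hε]
    have hm0 : 0 ≤ m := le_trans (abs_nonneg _) hm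
    rw [abs_of_nonneg hm0]
    exact mul_le_mul_of_nonneg_right hm hε.le
  have hc1 : (1:ℝ) ≤ Real.cosh (ε/2) := Real.one_le_cosh _
  have hfin : Real.cosh ((s - 1/2)*ε) ≤ Real.cosh (m*ε) * Real.cosh (ε/2) :=
    le_trans hcc (le_mul_of_one_le_right (Real.cosh_pos _).le hc1)
  nlinarith [mul_le_mul_of_nonneg_right hfin hsh.le]



lemma integrable_of_ae_bound {Ω : Type} {m0 : MeasurableSpace Ω} {μ : Measure Ω}
    [IsProbabilityMeasure μ] {f : Ω → ℝ} (C : ℝ)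
    (hmeas : AEStronglyMeasurable f μ) (hbd : ∀ᵐ ω ∂μ, |f ω| ≤ C) : Integrable f μ :=
  (integrable_const C).mono' hmeas (by filter_upwards [hbd] with ω h; rwa [Real.norm_eq_abs])

lemma rpow_bound {lo hi x t : ℝ} (hlo : 0 < lo) (h1 : lo ≤ x) (h2 : x ≤ hi) :
    x ^ t ≤ lo ^ t + hi ^ t := by
  rcases le_or_gt 0 t with ht | ht
  · have h3 : x ^ t ≤ hi ^ t := Real.rpow_le_rpow (le_trans hlo.le h1) h2 ht
    have h0 : (0:ℝ) ≤ lo ^ t := Real.rpow_nonneg hlo.le t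
    linarith
  · have h3 : x ^ t ≤ lo ^ t := Real.rpow_le_rpow_of_nonpos hlo h1 ht.le
    have h0 : (0:ℝ) ≤ hi ^ t := Real.rpow_nonneg (le_trans hlo.le (le_trans h1 h2)) t
    linarith

section Core

variable {Ω : Type} {m0 : MeasurableSpace Ω} (μ : Measure Ω) [IsProbabilityMeasure μ]
  (ℱ : Filtration ℕ m0) (Y : ℕ → Ω → ℝ)

/-- single recursion step -/
lemma step_bound (hY : Martingale Y ℱ μ) (i : ℕ) (ε lo hi : ℝ) (hε : 0 < ε) (hlo : 0 < lo)
    (hbi : ∀ᵐ ω ∂μ, lo ≤ Y i ω ∧ Y i ω ≤ hi)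
    (hbi1 : ∀ᵐ ω ∂μ, lo ≤ Y (i+1) ω ∧ Y (i+1) ω ≤ hi)
    (hratio : ∀ᵐ ω ∂μ, Real.exp (-ε) * Y i ω ≤ Y (i+1) ω ∧ Y (i+1) ω ≤ Real.exp ε * Y i ω)
    (s m : ℝ) (hconv : ConvexOn ℝ (Set.Ioi (0:ℝ)) fun x : ℝ => x ^ s) (hm : |s - 1/2| ≤ m) :
    ∫ ω, Y (i+1) ω ^ s ∂μ ≤ Real.cosh (m * ε) * ∫ ω, Y i ω ^ s ∂μ := by
  set a := Real.exp (-ε) with ha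
  set b := Real.exp ε with hb
  have hab : a < b := Real.exp_lt_exp.2 (by linarith)
  have hd : (0:ℝ) < b - a := by linarith
  set A : ℝ := (b * a ^ s - a * b ^ s) / (b - a) with hA
  set B : ℝ := (b ^ s - a ^ s) / (b - a) with hB
  set g : Ω → ℝ := fun ω => Y i ω ^ (s - 1) with hg
  -- measurability
  have hYim : Measurable (Y i) := ((hY.stronglyMeasurable i).measurable).mono (ℱ.le i) le_rfl
  have hYi1m : Measurable (Y (i+1)) :=
    ((hY.stronglyMeasurable (i+1)).measurable).mono (ℱ.le (i+1)) le_rfl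
  have hrpow : ∀ t : ℝ, Measurable (fun x : ℝ => x ^ t) := fun t => measurable_id.pow_const t
  -- lo ≤ hi
  have hlohi : lo ≤ hi := by
    obtain ⟨ω, h⟩ := hbi.exists
    linarith [h.1, h.2]
  have hhi : 0 < hi := lt_of_lt_of_le hlo hlohi
  -- integrability
  have int_pow : ∀ (j : ℕ) (t : ℝ), (∀ᵐ ω ∂μ, lo ≤ Y j ω ∧ Y j ω ≤ hi) → Measurable (Y j) →
      Integrable (fun ω => Y j ω ^ t) μ := by
    intro j t hb hm'
    refine integrable_of_ae_bound (lo ^ t + hi ^ t) ((hrpow t).comp hm').aestronglyMeasurable ?_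
    filter_upwards [hb] with ω h
    rw [abs_of_nonneg (Real.rpow_nonneg (le_trans hlo.le h.1) t)]
    exact rpow_bound hlo h.1 h.2
  have int_i_s : Integrable (fun ω => Y i ω ^ s) μ := int_pow i s hbi hYim
  have int_i1_s : Integrable (fun ω => Y (i+1) ω ^ s) μ := int_pow (i+1) s hbi1 hYi1m
  have int_gY1 : Integrable (g * Y (i+1)) μ := by
    refine integrable_of_ae_bound ((lo ^ (s-1) + hi ^ (s-1)) * hi)
      (((hrpow (s-1)).comp hYim).mul hYi1m).aestronglyMeasurable ?_
    filter_upwards [hbi, hbi1] with ω h1 h2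
    have hg0 : 0 ≤ g ω := Real.rpow_nonneg (le_trans hlo.le h1.1) _
    have hY10 : 0 ≤ Y (i+1) ω := le_trans hlo.le h2.1
    rw [Pi.mul_apply, abs_of_nonneg (mul_nonneg hg0 hY10)]
    exact mul_le_mul (rpow_bound hlo h1.1 h1.2) h2.2 hY10
      (by positivity)
  -- pointwise secant inequality
  have h_ae : ∀ᵐ ω ∂μ, Y (i+1) ω ^ s ≤ A * Y i ω ^ s + B * (g ω * Y (i+1) ω) := by
    filter_upwards [hbi, hratio] with ω hYib hr
    have hYip : 0 < Y i ω := lt_of_lt_of_le hlo hYib.1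
    have hYi1p : 0 < Y (i+1) ω := lt_of_lt_of_le (by positivity) hr.1
    set r := Y (i+1) ω / Y i ω with hrdef
    have hr1 : a ≤ r := by rw [hrdef, le_div_iff₀ hYip]; exact hr.1
    have hr2 : r ≤ b := by rw [hrdef, div_le_iff₀ hYip]; linarith [hr.2]
    have hsec := rpow_le_secant hε hconv hr1 hr2
    have hYs : Y (i+1) ω ^ s = r ^ s * Y i ω ^ s := by
      rw [hrdef, Real.div_rpow hYi1p.le hYip.le]
      field_simp
    have hgY : g ω * Y (i+1) ω = Y i ω ^ s * r := by
      rw [hg]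
      simp only []
      rw [Real.rpow_sub_one hYip.ne', hrdef]
      field_simp
    rw [hYs, hgY]
    have hstep := mul_le_mul_of_nonneg_right hsec (Real.rpow_nonneg hYip.le s)
    calc r ^ s * Y i ω ^ s
        ≤ ((b - r) * a ^ s + (r - a) * b ^ s) / (b - a) * Y i ω ^ s := hstep
      _ = A * Y i ω ^ s + B * (Y i ω ^ s * r) := by
          rw [hA, hB]
          field_simp
          ring
  -- integrate
  have key1 : ∫ ω, Y (i+1) ω ^ s ∂μ
      ≤ ∫ ω, (A * Y i ω ^ s + B * (g ω * Y (i+1) ω)) ∂μ := by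
    refine integral_mono_ae int_i1_s ?_ h_ae
    exact (int_i_s.const_mul A).add (int_gY1.const_mul B)
  have e1 : ∫ ω, (A * Y i ω ^ s + B * (g ω * Y (i+1) ω)) ∂μ
      = A * ∫ ω, Y i ω ^ s ∂μ + B * ∫ ω, g ω * Y (i+1) ω ∂μ := by
    have i1 : Integrable (fun ω => A * Y i ω ^ s) μ := int_i_s.const_mul A
    have i2 : Integrable (fun ω => B * (g ω * Y (i+1) ω)) μ := by
      have h2 := int_gY1.const_mul B
      simpa [Pi.mul_apply] using h2
    rw [integral_add i1 i2, integral_const_mul, integral_const_mul]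
  -- martingale pull-out
  have hgsm : StronglyMeasurable[ℱ i] g := by
    have hm' : Measurable[ℱ i] (Y i) := (hY.stronglyAdapted i).measurable
    exact ((hrpow (s-1)).comp hm').stronglyMeasurable
  have hpull : μ[g * Y (i+1)|ℱ i] =ᵐ[μ] g * μ[Y (i+1)|ℱ i] :=
    condExp_mul_of_stronglyMeasurable_left hgsm int_gY1 (hY.integrable (i+1))
  have hcond : μ[Y (i+1)|ℱ i] =ᵐ[μ] Y i := hY.condExp_ae_eq (Nat.le_succ i)
  have e2 : ∫ ω, g ω * Y (i+1) ω ∂μ = ∫ ω, g ω * Y i ω ∂μ := by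
    calc ∫ ω, g ω * Y (i+1) ω ∂μ = ∫ ω, (μ[g * Y (i+1)|ℱ i]) ω ∂μ :=
          (integral_condExp (ℱ.le i)).symm
      _ = ∫ ω, g ω * Y i ω ∂μ := by
          refine integral_congr_ae (hpull.trans ?_)
          filter_upwards [hcond] with ω h
          simp only [Pi.mul_apply, h]
  have e3 : ∫ ω, g ω * Y i ω ∂μ = ∫ ω, Y i ω ^ s ∂μ := by
    refine integral_congr_ae ?_
    filter_upwards [hbi] with ω h
    have hp : 0 < Y i ω := lt_of_lt_of_le hlo h.1
    rw [hg]
    simp only []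
    rw [Real.rpow_sub_one hp.ne']
    field_simp
  -- combine
  have hpos : 0 ≤ ∫ ω, Y i ω ^ s ∂μ := by
    refine integral_nonneg_of_ae ?_
    filter_upwards [hbi] with ω h
    exact Real.rpow_nonneg (le_trans hlo.le h.1) s
  have hKbd : A + B ≤ Real.cosh (m * ε) := by
    have : A + B = ((b - 1) * a ^ s + (1 - a) * b ^ s) / (b - a) := by
      rw [hA, hB, ← add_div]
      congr 1
      ring
    rw [this]
    exact secant_value_le hε hm
  calc ∫ ω, Y (i+1) ω ^ s ∂μ
      ≤ A * ∫ ω, Y i ω ^ s ∂μ + B * ∫ ω, g ω * Y (i+1) ω ∂μ := le_trans key1 (le_of_eq e1)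
    _ = (A + B) * ∫ ω, Y i ω ^ s ∂μ := by rw [e2, e3]; ring
    _ ≤ Real.cosh (m * ε) * ∫ ω, Y i ω ^ s ∂μ := mul_le_mul_of_nonneg_right hKbd hpos

/-- iterated moment bound -/
lemma moment_bound (hY : Martingale Y ℱ μ) (n : ℕ) (ε lo hi μv : ℝ) (hε : 0 < ε)
    (hlo : 0 < lo) (hμv : 0 < μv)
    (hY0 : ∀ᵐ ω ∂μ, Y 0 ω = μv)
    (hbd : ∀ i, i ≤ n → ∀ᵐ ω ∂μ, lo ≤ Y i ω ∧ Y i ω ≤ hi)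
    (hratio : ∀ i, 1 ≤ i → i ≤ n → ∀ᵐ ω ∂μ,
      Real.exp (-ε) * Y (i-1) ω ≤ Y i ω ∧ Y i ω ≤ Real.exp ε * Y (i-1) ω)
    (s m : ℝ) (hconv : ConvexOn ℝ (Set.Ioi (0:ℝ)) fun x : ℝ => x ^ s) (hm : |s - 1/2| ≤ m) :
    ∫ ω, Y n ω ^ s ∂μ ≤ μv ^ s * Real.exp ((n:ℝ) * (m^2 * ε^2 / 2)) := by
  have hcos : Real.cosh (m * ε) ≤ Real.exp (m^2 * ε^2 / 2) := by
    have := Real.cosh_le_exp_half_sq (m * ε)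
    rwa [show (m*ε)^2/2 = m^2*ε^2/2 from by ring] at this
  have claim : ∀ i, i ≤ n → ∫ ω, Y i ω ^ s ∂μ ≤ μv ^ s * Real.exp ((i:ℝ) * (m^2*ε^2/2)) := by
    intro i
    induction i with
    | zero =>
      intro _
      have : ∫ ω, Y 0 ω ^ s ∂μ = μv ^ s := by
        rw [integral_congr_ae (g := fun _ => μv ^ s) (by filter_upwards [hY0] with ω h; rw [h])]
        simp [measure_univ]
      rw [this]
      simp
    | succ i ih =>
      intro h
      have hi_le : i ≤ n := le_trans (Nat.le_succ i) h
      have hstep := step_bound μ ℱ Y hY i ε lo hi hε hlo (hbd i hi_le) (hbd (i+1) h)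
        (by have := hratio (i+1) (by omega) h; simpa using this) s m hconv hm
      have hpos : 0 ≤ ∫ ω, Y i ω ^ s ∂μ := by
        refine integral_nonneg_of_ae ?_
        filter_upwards [hbd i hi_le] with ω hb
        exact Real.rpow_nonneg (le_trans hlo.le hb.1) s
      calc ∫ ω, Y (i+1) ω ^ s ∂μ
          ≤ Real.cosh (m * ε) * ∫ ω, Y i ω ^ s ∂μ := hstep
        _ ≤ Real.exp (m^2*ε^2/2) * (μv ^ s * Real.exp ((i:ℝ)*(m^2*ε^2/2))) := by
            refine mul_le_mul hcos (ih hi_le) hpos (Real.exp_nonneg _)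
        _ = μv ^ s * (Real.exp (m^2*ε^2/2) * Real.exp ((i:ℝ)*(m^2*ε^2/2))) := by ring
        _ = μv ^ s * Real.exp (((i+1:ℕ):ℝ) * (m^2*ε^2/2)) := by
            rw [← Real.exp_add]
            push_cast
            ring_nf
  exact claim n le_rfl

end Core


lemma exponent_ineq (L T lam c : ℝ) (n : ℕ) (ε : ℝ)
    (hL0 : 0 < L) (hL1 : 1 ≤ L) (hT0 : 0 < T) (hT : T ≤ 1/4)
    (hcdef : c = (lam+1)^2 * ε^2 / 2)
    (hne : (n:ℝ)*ε^2*L = T^2)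
    (hlamT : lam * T = 4*L) :
    (4*T)*(1-lam) + (n:ℝ)*c ≤ -L := by
  have key : (n:ℝ)*c*L = (lam+1)^2*T^2/2 := by
    rw [hcdef, ← hne]; ring
  have k2 : lam^2*T^2 = 16*L^2 := by linear_combination (lam*T + 4*L) * hlamT
  have k3 : lam*T^2 = 4*L*T := by linear_combination T * hlamT
  rw [← mul_le_mul_iff_of_pos_right hL0]
  have hXL : ((4*T)*(1-lam) + (n:ℝ)*c) * L = 8*T*L - 8*L^2 + T^2/2 := by
    linear_combination key + (1/2)*k2 + k3 + (-4*L)*hlamT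
  rw [hXL]
  have p1 : L*T ≤ L*(1/4) := mul_le_mul_of_nonneg_left hT hL0.le
  have p2 : L ≤ L*L := le_mul_of_one_le_left hL0.le hL1
  have p3 : T^2 ≤ (1/4)^2 := pow_le_pow_left₀ hT0.le hT 2
  have p4 : (1:ℝ) ≤ L*L := le_trans hL1 p2
  nlinarith [p1, p2, p3, p4]

set_option maxHeartbeats 1600000 in
/-- Concentration for nonnegative martingales with bounded ratios: if
`Y_0 = μv` and `e^{-ε}·Y_{i-1} ≤ Y_i ≤ e^{ε}·Y_{i-1}` a.s. for `i ∈ [n]`, then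
the expected deviation of `Y_n` from `[e^{-ε'}μv, e^{ε'}μv]` is at most `C·μv·δ`,
where `ε' = C·ε·√(n·ln(1/δ))`. -/
theorem concen_martingale_bounded_ratio :
    ∃ C > (0:ℝ), ∃ c₀ > (0:ℝ),
      ∀ (Ω : Type) [m0 : MeasurableSpace Ω], ∀ (μ : Measure Ω), IsProbabilityMeasure μ →
      ∀ (n : ℕ), 1 ≤ n →
      ∀ ε δ : ℝ, 0 < ε → ε ≤ c₀ → 0 < δ → δ ≤ c₀ →
        ε * Real.sqrt (n * Real.log (1 / δ)) ≤ c₀ →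
      ∀ μv : ℝ, 0 < μv →
      ∀ (ℱ : Filtration ℕ m0) (Y : ℕ → Ω → ℝ),
        Martingale Y ℱ μ →
        (∀ᵐ ω ∂μ, Y 0 ω = μv) →
        (∀ i, i ≤ n → ∀ᵐ ω ∂μ, 0 ≤ Y i ω) →
        (∀ i, 1 ≤ i → i ≤ n → ∀ᵐ ω ∂μ,
          Real.exp (-ε) * Y (i - 1) ω ≤ Y i ω ∧ Y i ω ≤ Real.exp ε * Y (i - 1) ω) →
        (∫ ω, (max (Y n ω - Real.exp (C * ε * Real.sqrt (n * Real.log (1 / δ))) * μv) 0 +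
               max (μv - Real.exp (C * ε * Real.sqrt (n * Real.log (1 / δ))) * Y n ω) 0) ∂μ)
          ≤ C * μv * δ := by
  refine ⟨4, by norm_num, 1/4, by norm_num, ?_⟩
  intro Ω m0 μ hprob n hn ε δ hε hεc hδ hδc hεnc μv hμv ℱ Y hY hY0 _hYnn hratio
  haveI := hprob
  set L := Real.log (1/δ) with hLdef
  -- basic log facts
  have hlog4 : (1:ℝ) ≤ Real.log 4 := by
    rw [Real.le_log_iff_exp_le (by norm_num : (0:ℝ) < 4)]
    have h9 := Real.exp_one_lt_d9
    linarith
  have hL1 : (1:ℝ) ≤ L := by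
    have h4 : Real.log δ ≤ Real.log (1/4) := Real.log_le_log hδ hδc
    rw [one_div, Real.log_inv] at h4
    rw [hLdef, one_div, Real.log_inv]
    linarith
  have hL0 : (0:ℝ) < L := by linarith
  have hn1 : (1:ℝ) ≤ (n:ℝ) := by exact_mod_cast hn
  have hnL0 : (0:ℝ) < (n:ℝ) * L := by positivity
  set T := ε * Real.sqrt ((n:ℝ) * L) with hTdef
  have hT0 : (0:ℝ) < T := mul_pos hε (Real.sqrt_pos.2 hnL0)
  have hT : T ≤ 1/4 := hεnc
  have hT2 : T^2 = (n:ℝ) * L * ε^2 := by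
    rw [hTdef, mul_pow, Real.sq_sqrt hnL0.le]; ring
  set lam := 4*L/T with hlamdef
  have hlam1 : (1:ℝ) ≤ lam := by
    rw [hlamdef, le_div_iff₀ hT0]
    linarith
  have hlamT : lam * T = 4*L := by
    rw [hlamdef]; field_simp
  -- pathwise bounds
  set lo := μv * Real.exp (-((n:ℝ)*ε)) with hlodef
  set hi := μv * Real.exp ((n:ℝ)*ε) with hhidef
  have hlo0 : (0:ℝ) < lo := by rw [hlodef]; positivity
  have hchain : ∀ i, i ≤ n → ∀ᵐ ω ∂μ,
      μv * Real.exp (-((i:ℝ)*ε)) ≤ Y i ω ∧ Y i ω ≤ μv * Real.exp ((i:ℝ)*ε) := by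
    intro i
    induction i with
    | zero =>
      intro _
      filter_upwards [hY0] with ω h
      simp [h]
    | succ i ih =>
      intro h
      have h1 := ih (le_trans (Nat.le_succ i) h)
      have h2 := hratio (i+1) (by omega) h
      filter_upwards [h1, h2] with ω hb hr
      simp only [Nat.add_sub_cancel] at hr
      have hYi0 : 0 < Y i ω := lt_of_lt_of_le (by positivity) hb.1
      constructor
      · have e : μv * Real.exp (-(((i+1:ℕ):ℝ) * ε)) = Real.exp (-ε) * (μv * Real.exp (-((i:ℝ)*ε))) := by
          rw [show (-(((i+1:ℕ):ℝ) * ε)) = (-ε) + (-((i:ℝ)*ε)) from by push_cast; ring,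
            Real.exp_add]
          ring
        calc μv * Real.exp (-(((i+1:ℕ):ℝ) * ε))
            = Real.exp (-ε) * (μv * Real.exp (-((i:ℝ)*ε))) := e
          _ ≤ Real.exp (-ε) * Y i ω := by
              exact mul_le_mul_of_nonneg_left hb.1 (Real.exp_nonneg _)
          _ ≤ Y (i+1) ω := hr.1
      · have e : μv * Real.exp (((i+1:ℕ):ℝ) * ε) = Real.exp ε * (μv * Real.exp ((i:ℝ)*ε)) := by
          rw [show (((i+1:ℕ):ℝ) * ε) = ε + ((i:ℝ)*ε) from by push_cast; ring, Real.exp_add]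
          ring
        calc Y (i+1) ω ≤ Real.exp ε * Y i ω := hr.2
          _ ≤ Real.exp ε * (μv * Real.exp ((i:ℝ)*ε)) := by
              exact mul_le_mul_of_nonneg_left hb.2 (Real.exp_nonneg _)
          _ = μv * Real.exp (((i+1:ℕ):ℝ) * ε) := e.symm
  have hbd : ∀ i, i ≤ n → ∀ᵐ ω ∂μ, lo ≤ Y i ω ∧ Y i ω ≤ hi := by
    intro i h
    have hin : (i:ℝ) ≤ (n:ℝ) := by exact_mod_cast h
    filter_upwards [hchain i h] with ω hb
    have c1 : Real.exp (-((n:ℝ)*ε)) ≤ Real.exp (-((i:ℝ)*ε)) := by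
      rw [Real.exp_le_exp]
      exact neg_le_neg (mul_le_mul_of_nonneg_right hin hε.le)
    have c2 : Real.exp ((i:ℝ)*ε) ≤ Real.exp ((n:ℝ)*ε) := by
      rw [Real.exp_le_exp]
      exact mul_le_mul_of_nonneg_right hin hε.le
    constructor
    · exact le_trans (mul_le_mul_of_nonneg_left c1 hμv.le) hb.1
    · exact le_trans hb.2 (mul_le_mul_of_nonneg_left c2 hμv.le)
  -- moment bounds
  set c := (lam+1)^2 * ε^2 / 2 with hcdef
  have hconv1 : ConvexOn ℝ (Set.Ioi (0:ℝ)) fun x : ℝ => x ^ lam :=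
    convexOn_rpow' (Or.inl hlam1)
  have hconv2 : ConvexOn ℝ (Set.Ioi (0:ℝ)) fun x : ℝ => x ^ (-lam) :=
    convexOn_rpow' (Or.inr (by linarith))
  have hm1 : |lam - 1/2| ≤ lam + 1 := abs_le.2 ⟨by linarith, by linarith⟩
  have hm2 : |(-lam) - 1/2| ≤ lam + 1 := abs_le.2 ⟨by linarith, by linarith⟩
  have M1 := moment_bound μ ℱ Y hY n ε lo hi μv hε hlo0 hμv hY0 hbd hratio
    lam (lam+1) hconv1 hm1
  have M2 := moment_bound μ ℱ Y hY n ε lo hi μv hε hlo0 hμv hY0 hbd hratio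
    (-lam) (lam+1) hconv2 hm2
  -- abbreviations
  set aE := Real.exp (4 * ε * Real.sqrt ((n:ℝ) * L)) with haEdef
  have haET : aE = Real.exp (4*T) := by
    rw [haEdef, hTdef]; ring_nf
  have haE0 : (0:ℝ) < aE := Real.exp_pos _
  have haE1 : (1:ℝ) ≤ aE := by
    rw [haET]
    have : (0:ℝ) ≤ 4*T := by positivity
    calc (1:ℝ) = Real.exp 0 := (Real.exp_zero).symm
      _ ≤ Real.exp (4*T) := Real.exp_le_exp.2 this
  -- measurability / integrability
  have hYnm : Measurable (Y n) := ((hY.stronglyMeasurable n).measurable).mono (ℱ.le n) le_rfl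
  have hrpow : ∀ t : ℝ, Measurable (fun x : ℝ => x ^ t) := fun t => measurable_id.pow_const t
  have hlohi : lo ≤ hi := by
    obtain ⟨ω, h⟩ := (hbd n le_rfl).exists
    linarith [h.1, h.2]
  have hhi0 : (0:ℝ) < hi := lt_of_lt_of_le hlo0 hlohi
  have int_pow : ∀ t : ℝ, Integrable (fun ω => Y n ω ^ t) μ := by
    intro t
    refine integrable_of_ae_bound (lo ^ t + hi ^ t) ((hrpow t).comp hYnm).aestronglyMeasurable ?_
    filter_upwards [hbd n le_rfl] with ω h
    rw [abs_of_nonneg (Real.rpow_nonneg (le_trans hlo0.le h.1) t)]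
    exact rpow_bound hlo0 h.1 h.2
  have int_f1 : Integrable (fun ω => max (Y n ω - aE*μv) 0) μ := by
    refine integrable_of_ae_bound (hi + aE*μv)
      (((hYnm.sub measurable_const).max measurable_const).aestronglyMeasurable) ?_
    filter_upwards [hbd n le_rfl] with ω h
    rw [abs_of_nonneg (le_max_right _ 0)]
    have hc : (0:ℝ) < aE*μv := mul_pos haE0 hμv
    refine max_le (by linarith [h.2]) (by positivity)
  have int_f2 : Integrable (fun ω => max (μv - aE * Y n ω) 0) μ := by
    refine integrable_of_ae_bound μv
      ((((measurable_const).sub (hYnm.const_mul aE)).max measurable_const).aestronglyMeasurable) ?_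
    filter_upwards [hbd n le_rfl] with ω h
    rw [abs_of_nonneg (le_max_right _ 0)]
    have hy0 : (0:ℝ) < Y n ω := lt_of_lt_of_le hlo0 h.1
    refine max_le (by linarith [mul_pos haE0 hy0]) hμv.le
  -- pointwise overshoot bounds
  have h_f1 : ∀ᵐ ω ∂μ, max (Y n ω - aE*μv) 0 ≤ (aE*μv)^(1-lam) * Y n ω ^ lam := by
    filter_upwards [hbd n le_rfl] with ω h
    have hy0 : (0:ℝ) < Y n ω := lt_of_lt_of_le hlo0 h.1
    have hc0 : (0:ℝ) < aE*μv := by positivity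
    rcases le_or_gt (Y n ω) (aE*μv) with hc | hc
    · refine max_le ?_ (by positivity)
      have hr : (0:ℝ) ≤ (aE*μv)^(1-lam) * Y n ω ^ lam := by positivity
      linarith
    · refine max_le ?_ (by positivity)
      have h1 : Y n ω ^ (1-lam) ≤ (aE*μv)^(1-lam) :=
        Real.rpow_le_rpow_of_nonpos hc0 hc.le (by linarith)
      have h2 : Y n ω ^ (1-lam) * Y n ω ^ lam = Y n ω := by
        rw [← Real.rpow_add hy0, show (1:ℝ)-lam+lam = 1 from by ring, Real.rpow_one]
      have h3 := mul_le_mul_of_nonneg_right h1 (Real.rpow_nonneg hy0.le lam)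
      rw [h2] at h3
      linarith
  have h_f2 : ∀ᵐ ω ∂μ, max (μv - aE * Y n ω) 0
      ≤ (μv^(1+lam) * aE^(-lam)) * Y n ω ^ (-lam) := by
    filter_upwards [hbd n le_rfl] with ω h
    have hy0 : (0:ℝ) < Y n ω := lt_of_lt_of_le hlo0 h.1
    have hRHS : (0:ℝ) ≤ (μv^(1+lam) * aE^(-lam)) * Y n ω ^ (-lam) := by positivity
    rcases le_or_gt μv (aE * Y n ω) with hc | hc
    · exact max_le (by linarith) hRHS
    · refine max_le ?_ hRHS
      have h1 : (aE * Y n ω)^lam ≤ μv ^ lam :=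
        Real.rpow_le_rpow (by positivity) hc.le (by linarith)
      have hp : (0:ℝ) < (aE * Y n ω)^lam := Real.rpow_pos_of_pos (by positivity) _
      have h2 : (1:ℝ) ≤ μv^lam / (aE*Y n ω)^lam := (one_le_div hp).2 h1
      have h3 : μv ≤ μv * (μv^lam / (aE*Y n ω)^lam) := le_mul_of_one_le_right hμv.le h2
      have h4 : (μv^(1+lam) * aE^(-lam)) * Y n ω ^ (-lam)
          = μv * (μv^lam / (aE*Y n ω)^lam) := by
        rw [Real.rpow_add hμv, Real.rpow_one, Real.rpow_neg haE0.le, Real.rpow_neg hy0.le,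
          Real.mul_rpow haE0.le hy0.le]
        have hne1 : aE ^ lam ≠ 0 := (Real.rpow_pos_of_pos haE0 lam).ne'
        have hne2 : Y n ω ^ lam ≠ 0 := (Real.rpow_pos_of_pos hy0 lam).ne'
        field_simp
      rw [h4]
      linarith [mul_pos haE0 hy0, h3]
  -- integral bounds
  have b1 : (∫ ω, max (Y n ω - aE*μv) 0 ∂μ)
      ≤ (aE*μv)^(1-lam) * (μv^lam * Real.exp ((n:ℝ)*c)) := by
    have step := integral_mono_ae int_f1 ((int_pow lam).const_mul ((aE*μv)^(1-lam))) h_f1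
    rw [integral_const_mul] at step
    refine le_trans step (mul_le_mul_of_nonneg_left ?_ (Real.rpow_nonneg (by positivity) _))
    exact M1
  have b2 : (∫ ω, max (μv - aE * Y n ω) 0 ∂μ)
      ≤ (μv^(1+lam) * aE^(-lam)) * (μv^(-lam) * Real.exp ((n:ℝ)*c)) := by
    have step := integral_mono_ae int_f2 ((int_pow (-lam)).const_mul (μv^(1+lam) * aE^(-lam))) h_f2
    rw [integral_const_mul] at step
    refine le_trans step (mul_le_mul_of_nonneg_left ?_ (by positivity))
    exact M2
  -- simplify the two bounds
  have hval1 : (aE*μv)^(1-lam) * (μv^lam * Real.exp ((n:ℝ)*c))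
      = μv * (Real.exp ((4*T)*(1-lam)) * Real.exp ((n:ℝ)*c)) := by
    rw [haET, Real.mul_rpow (Real.exp_nonneg _) hμv.le, ← Real.exp_mul]
    have e : μv^((1:ℝ)-lam) * μv^lam = μv := by
      rw [← Real.rpow_add hμv, show (1:ℝ)-lam+lam = 1 from by ring, Real.rpow_one]
    linear_combination (Real.exp ((4*T)*(1-lam)) * Real.exp ((n:ℝ)*c)) * e
  have hval2 : (μv^(1+lam) * aE^(-lam)) * (μv^(-lam) * Real.exp ((n:ℝ)*c))
      = μv * (Real.exp ((4*T)*(-lam)) * Real.exp ((n:ℝ)*c)) := by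
    rw [haET, ← Real.exp_mul]
    have e : μv^((1:ℝ)+lam) * μv^(-lam) = μv := by
      rw [← Real.rpow_add hμv, show (1:ℝ)+lam+(-lam) = 1 from by ring, Real.rpow_one]
    linear_combination (Real.exp ((4*T)*(-lam)) * Real.exp ((n:ℝ)*c)) * e
  -- key exponent inequality
  have hlogδ : Real.log δ = -L := by
    rw [hLdef, one_div, Real.log_inv]; ring
  have hkeyexp : (4*T)*(1-lam) + (n:ℝ)*c ≤ Real.log δ := by
    rw [hlogδ]
    have hne : (n:ℝ)*ε^2*L = T^2 := by rw [hT2]; ring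
    exact exponent_ineq L T lam c n ε hL0 hL1 hT0 hT hcdef hne hlamT
  have hkeyexp2 : (4*T)*(-lam) + (n:ℝ)*c ≤ Real.log δ := by
    have he : (4*T)*(1-lam) = 4*T + (4*T)*(-lam) := by ring
    have : (4*T)*(-lam) ≤ (4*T)*(1-lam) := by rw [he]; linarith
    linarith
  have hexp1 : Real.exp ((4*T)*(1-lam)) * Real.exp ((n:ℝ)*c) ≤ δ := by
    rw [← Real.exp_add]
    calc Real.exp ((4*T)*(1-lam) + (n:ℝ)*c) ≤ Real.exp (Real.log δ) :=
          Real.exp_le_exp.2 hkeyexp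
      _ = δ := Real.exp_log hδ
  have hexp2 : Real.exp ((4*T)*(-lam)) * Real.exp ((n:ℝ)*c) ≤ δ := by
    rw [← Real.exp_add]
    calc Real.exp ((4*T)*(-lam) + (n:ℝ)*c) ≤ Real.exp (Real.log δ) :=
          Real.exp_le_exp.2 hkeyexp2
      _ = δ := Real.exp_log hδ
  -- put it together
  have hsplit : (∫ ω, (max (Y n ω - aE * μv) 0 + max (μv - aE * Y n ω) 0) ∂μ)
      = (∫ ω, max (Y n ω - aE*μv) 0 ∂μ) + (∫ ω, max (μv - aE * Y n ω) 0 ∂μ) :=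
    integral_add int_f1 int_f2
  rw [hsplit]
  have hb1' : (∫ ω, max (Y n ω - aE*μv) 0 ∂μ) ≤ μv * δ := by
    refine le_trans b1 ?_
    rw [hval1]
    exact mul_le_mul_of_nonneg_left hexp1 hμv.le
  have hb2' : (∫ ω, max (μv - aE * Y n ω) 0 ∂μ) ≤ μv * δ := by
    refine le_trans b2 ?_
    rw [hval2]
    exact mul_le_mul_of_nonneg_left hexp2 hμv.le
  linarith [hb1', hb2', mul_pos hμv hδ]
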